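/- The third rack homology group H_3(BT) of the three-colour rack T is isomorphic to Z × Z/3. -/

import Mathlib

/-- The three-colour rack operation on `T = ZMod 3`: `a ^ b := 2*b - a`. -/
def triOp (a b : ZMod 3) : ZMod 3 := 2 * b - a

/-- Face maps of the rack space of the three-colour rack: `∂_i^0` deletes the
`i`-th coordinate; `∂_i^1` acts by `x_i` on all earlier coordinates and then
deletes the `i`-th coordinate. -/
def triFace (ε : Bool) {n : ℕ} (i : Fin (n + 1)) (x : Fin (n + 1) → ZMod 3) :
    Fin n → ZMod 3 :=
  Fin.removeNth i (fun j => if ε = true ∧ j < i then triOp (x j) (x i) else x j)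

/-- Boundary of a single `(n+1)`-cube: `∂ x = Σ_{i} (-1)^i (∂_i^0 x - ∂_i^1 x)`. -/
noncomputable def triBnd {n : ℕ} (x : Fin (n + 1) → ZMod 3) : (Fin n → ZMod 3) →₀ ℤ :=
  ∑ i : Fin (n + 1), (-1 : ℤ) ^ ((i : ℕ) + 1) •
    (Finsupp.single (triFace false i x) 1 - Finsupp.single (triFace true i x) 1)

/-- The boundary map of the rack chain complex of the three-colour rack,
from degree `n+1` to degree `n`. -/
noncomputable def triBoundary (n : ℕ) :
    ((Fin (n + 1) → ZMod 3) →₀ ℤ) →ₗ[ℤ] ((Fin n → ZMod 3) →₀ ℤ) :=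
  Finsupp.lift _ ℤ _ triBnd

/-- Integer matrix entry of the boundary map. -/
def cmat (n : ℕ) (x : Fin (n + 1) → ZMod 3) (a : Fin n → ZMod 3) : ℤ :=
  ∑ i : Fin (n + 1), (-1 : ℤ) ^ ((i : ℕ) + 1) *
    ((if triFace false i x = a then 1 else 0) - (if triFace true i x = a then 1 else 0))

def enc {n : ℕ} (a : Fin n → ZMod 3) : ℕ :=
  (List.ofFn fun j => (a j).val).foldl (fun s v => 3 * s + v) 0

def Lz1 : List ℤ := [0, 0, 0, 0, 0, 0, 0, 0, 0, 0, 0, 0, 0, 0, 0, 0, 0, 0, 0, 0, 0, 0, 0, 0, 0, 0, 1]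
def Lz2 : List ℤ := [0, 1, 0, 1, 0, 0, 0, 1, 0, 0, 0, 0, 0, 0, 0, 0, 0, 0, 0, 0, 0, 0, 0, 0, 1, 0, -4]
def Lcf : List ℤ := [1, 0, 3, 0, 1, 0, 3, 0, 1, 1, 0, 0, -2, 1, -1, 4, 5, 1, 1, -1, 4, -3, 1, 0, 4, 2, 1]
def Lcg : List ℤ := [0, 0, 1, 0, 0, 0, 1, 0, 0, 0, 0, 0, -1, 0, -1, 2, 2, 0, 0, 1, 1, 0, 0, -1, 1, 0, 0]
def Luw : List ℤ := [0, 0, -3, 0, 0, -8, -5, -3, 0, 0, 1, 0, 0, 0, 1, 0, 0, 2, -2, 0, 0, 1, 0, 1, 0, 0, -1, 0, 0, 0, 1, 0, -1, 0, 0, 0, 0, 0, -2, 0, 0, 0, 0, 0, 0, 0, 0, 0, 0, 0, 0, 0, 0, 0, 0, 0, 0, 1, 0, 0, 0, 0, 0, 0, 0, 0, 0, 0, 0, 0, 0, 0, 0, 0, 0, 0, 0, 0, 0, 0, 0]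
def LTm : List (List ℤ) := [[0, -1, 0, 0, 0, 0, 0, 0, 0, 0, 0, 0, 0, 0, 0, 0, 0, 0, 0, 0, 0, 0, 0, 0, 0, 0, 0],
  [0, -1, 0, -1, 0, 0, 0, -1, 0, 0, -1, 1, 0, 0, 0, 0, 0, 0, 0, 0, 0, 0, 0, 0, 0, 0, 0],
  [0, 0, 0, 0, 0, 0, 0, -1, 0, 0, -1, 1, 0, 0, 0, 0, 0, 0, 0, 0, 0, 0, 0, 0, 0, 0, 0],
  [0, -1, 0, -1, 0, 1, 0, 0, 0, 0, 0, 0, 0, 0, 0, 0, 0, 0, 0, 0, 0, 0, 0, 0, 0, 0, 0],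
  [0, -1, 0, -1, 0, 0, 0, -1, 0, 0, 0, 0, 0, 0, 0, 0, 0, 0, 0, 0, 0, 0, 0, 0, 0, 0, 0],
  [0, 0, 0, 0, 0, 1, 0, 1, 0, 0, 1, 0, 0, 0, 0, 0, 0, 0, 0, 0, 0, 0, 0, 0, 0, 0, 0],
  [0, 0, 0, 0, 0, 0, 0, 0, 0, 0, 0, 0, 0, 0, 0, 0, 0, 0, 0, 0, 0, 0, 0, 0, 0, 0, 0],
  [0, 0, 0, 0, 0, 0, 0, 0, 0, 0, 0, 0, 0, 0, 0, 0, 0, 0, 0, 0, 0, 0, 0, 0, 0, 0, 0],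
  [0, 0, 0, 0, 0, 0, 0, 0, 0, 0, 0, 0, 0, 0, 0, 0, 0, 0, 0, 0, 0, 0, 0, 0, 0, 0, 0]]
def LSm : List (List ℤ) := [[0, 0, 0, 0, 0, -1, -1, 0, 0, 0, 0, 0, 0, 0, 0, 0, 0, 0, 0, 0, 0, 0, 0, 0, 0, 0, 0, 0, 0, 0, 0, 0, 0, 0, 0, 0, 0, 0, 0, 0, 0, 0, 0, 0, 0, 0, 0, 0, 0, 0, 0, 0, 0, 0, 0, 0, 0, 0, 0, 0, 0, 0, 0, 0, 0, 0, 0, 0, 0, 0, 0, 0, 0, 0, 0, 0, 0, 0, 0, 0, 0],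
  [0, 0, 0, 0, 0, 0, 0, 0, 0, 0, 0, 0, 0, 0, 0, 0, 0, 0, 0, 0, 0, 0, 0, 0, 0, 0, 0, 0, 0, 0, 0, 0, 0, 0, 0, 0, 0, 0, 0, 0, 0, 0, 0, 0, 0, 0, 0, 0, 0, 0, 0, 0, 0, 0, 0, 0, 0, 0, 0, 0, 0, 0, 0, 0, 0, 0, 0, 0, 0, 0, 0, 0, 0, 0, 0, 0, 0, 0, 0, 0, 0],
  [0, 0, 1, 0, 0, 1, 1, 1, 0, 0, 0, 0, 0, 0, 0, 0, 0, 0, 0, 0, 0, 0, 0, 0, 0, 0, 0, 0, 0, 0, 0, 0, 0, 0, 0, 0, 0, 0, 0, 0, 0, 0, 0, 0, 0, 0, 0, 0, 0, 0, 0, 0, 0, 0, 0, 0, 0, 0, 0, 0, 0, 0, 0, 0, 0, 0, 0, 0, 0, 0, 0, 0, 0, 0, 0, 0, 0, 0, 0, 0, 0],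
  [0, 0, 0, 0, 0, 0, 0, 0, 0, 0, 0, 0, 0, 0, 0, 0, 0, 0, 0, 0, 0, 0, 0, 0, 0, 0, 0, 0, 0, 0, 0, 0, 0, 0, 0, 0, 0, 0, 0, 0, 0, 0, 0, 0, 0, 0, 0, 0, 0, 0, 0, 0, 0, 0, 0, 0, 0, 0, 0, 0, 0, 0, 0, 0, 0, 0, 0, 0, 0, 0, 0, 0, 0, 0, 0, 0, 0, 0, 0, 0, 0],
  [0, 0, 0, 0, 0, -1, -1, 0, 0, 0, 0, 0, 0, 0, 1, 0, 0, 0, -1, 0, 0, 0, 0, 0, 0, 0, 0, 0, 0, 0, 0, 0, 0, 0, 0, 0, 0, 0, 0, 0, 0, 0, 0, 0, 0, 0, 0, 0, 0, 0, 0, 0, 0, 0, 0, 0, 0, 0, 0, 0, 0, 0, 0, 0, 0, 0, 0, 0, 0, 0, 0, 0, 0, 0, 0, 0, 0, 0, 0, 0, 0],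
  [0, 0, 0, 0, 0, 0, 0, 0, 0, 0, 0, 0, 0, 0, 0, 0, 0, 0, 0, 0, 0, 0, 0, 0, 0, 0, 0, 0, 0, 0, 0, 0, 0, 0, 0, 0, 0, 0, 0, 0, 0, 0, 0, 0, 0, 0, 0, 0, 0, 0, 0, 0, 0, 0, 0, 0, 0, 0, 0, 0, 0, 0, 0, 0, 0, 0, 0, 0, 0, 0, 0, 0, 0, 0, 0, 0, 0, 0, 0, 0, 0],
  [0, 0, 0, 0, 0, 1, 1, 0, 0, 0, 0, 0, 0, 0, 0, 1, 0, 0, 1, 0, 0, 0, 0, 0, 0, 0, 0, 0, 0, 0, 0, 0, 0, 0, 0, 0, 0, 0, 0, 0, 0, 0, 0, 0, 0, 0, 0, 0, 0, 0, 0, 0, 0, 0, 0, 0, 0, 0, 0, 0, 0, 0, 0, 0, 0, 0, 0, 0, 0, 0, 0, 0, 0, 0, 0, 0, 0, 0, 0, 0, 0],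
  [0, 0, 0, 0, 0, 0, 0, 0, 0, 0, 0, 0, 0, 0, 0, 0, 0, 0, 0, 0, 0, 0, 0, 0, 0, 0, 0, 0, 0, 0, 0, 0, 0, 0, 0, 0, 0, 0, 0, 0, 0, 0, 0, 0, 0, 0, 0, 0, 0, 0, 0, 0, 0, 0, 0, 0, 0, 0, 0, 0, 0, 0, 0, 0, 0, 0, 0, 0, 0, 0, 0, 0, 0, 0, 0, 0, 0, 0, 0, 0, 0],
  [0, 0, 0, 0, 0, 0, 0, 0, 0, 0, 0, 0, 0, 0, 0, 0, 0, 1, 0, 0, 0, 0, 0, 0, 0, 0, 0, 0, 0, 0, 0, 0, 0, 0, 0, 0, 0, 0, 0, 0, 0, 0, 0, 0, 0, 0, 0, 0, 0, 0, 0, 0, 0, 0, 0, 0, 0, 0, 0, 0, 0, 0, 0, 0, 0, 0, 0, 0, 0, 0, 0, 0, 0, 0, 0, 0, 0, 0, 0, 0, 0],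
  [0, 0, 0, 0, 0, -1, -1, 0, 0, 0, 0, 0, 0, 0, 0, 0, 0, 0, -1, 0, 0, 0, 0, 0, 0, 0, 0, 0, 0, 0, 0, 0, 0, 0, 0, 0, 0, 0, 0, 0, 0, 0, 0, 0, 0, 0, 0, 0, 0, 0, 0, 0, 0, 0, 0, 0, 0, 0, 0, 0, 0, 0, 0, 0, 0, 0, 0, 0, 0, 0, 0, 0, 0, 0, 0, 0, 0, 0, 0, 0, 0],
  [0, 0, 0, 0, 0, 0, 0, 0, 0, 0, 0, 0, 0, 0, 0, 0, 0, 0, 0, 0, 0, 0, 0, 0, 0, 0, 0, 0, 0, 0, 0, 0, 0, 0, 0, 0, 0, 0, 0, 0, 0, 0, 0, 0, 0, 0, 0, 0, 0, 0, 0, 0, 0, 0, 0, 0, 0, 0, 0, 0, 0, 0, 0, 0, 0, 0, 0, 0, 0, 0, 0, 0, 0, 0, 0, 0, 0, 0, 0, 0, 0],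
  [0, 0, 0, 0, 0, 0, 0, 0, 0, 0, 0, 0, 0, 0, 0, 0, 0, 0, 0, 0, 0, 0, 0, 0, 0, 0, 0, 0, 0, 0, 0, 0, 0, 0, 0, 0, 0, 0, 0, 0, 0, 0, 0, 0, 0, 0, 0, 0, 0, 0, 0, 0, 0, 0, 0, 0, 0, 0, 0, 0, 0, 0, 0, 0, 0, 0, 0, 0, 0, 0, 0, 0, 0, 0, 0, 0, 0, 0, 0, 0, 0],
  [0, 0, -1, 0, 0, -2, -1, -1, 0, 0, 0, 0, 0, 0, 0, 0, 0, 0, 0, 0, 0, 0, 0, 0, 0, 0, 0, 0, 0, 0, 0, 0, 0, 0, 0, 0, 0, 0, 0, 0, 0, 0, 0, 0, 0, 0, 0, 0, 0, 0, 0, 0, 0, 0, 0, 0, 0, 0, 0, 0, 0, 0, 0, 0, 0, 0, 0, 0, 0, 0, 0, 0, 0, 0, 0, 0, 0, 0, 0, 0, 0],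
  [0, 0, -1, 0, 0, -1, -1, 0, 0, 0, 0, 0, 0, 0, 0, 0, 0, 0, 0, 0, 0, 0, 0, 0, 0, 0, 0, 0, 0, 0, 0, 0, 0, 0, 0, 0, 0, 0, 0, 0, 0, 0, 0, 0, 0, 0, 0, 0, 0, 0, 0, 0, 0, 0, 0, 0, 0, 0, 0, 0, 0, 0, 0, 0, 0, 0, 0, 0, 0, 0, 0, 0, 0, 0, 0, 0, 0, 0, 0, 0, 0],
  [0, 0, -1, 0, 0, -2, -1, -1, 0, 0, 0, 0, 0, 0, 0, 0, 0, 0, 0, 0, 0, 0, 0, 0, 0, 0, 0, 0, 0, 0, 0, 0, 0, 0, 0, 0, 0, 0, -1, 0, 0, 0, 0, 0, 0, 0, 0, 0, 0, 0, 0, 0, 0, 0, 0, 0, 0, 0, 0, 0, 0, 0, 0, 0, 0, 0, 0, 0, 0, 0, 0, 0, 0, 0, 0, 0, 0, 0, 0, 0, 0],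
  [0, 0, 2, 0, 0, 3, 2, 2, 0, 0, 0, -1, 0, 0, 0, 0, 0, 0, 0, 0, 0, 0, 0, -1, 0, 0, 0, 0, 0, 0, 0, 0, 0, 0, 0, 0, 0, 0, 1, 0, 0, 0, 0, 0, 0, 0, 0, 0, 0, 0, 0, 0, 0, 0, 0, 0, 0, 0, 0, 0, 0, 0, 0, 0, 0, 0, 0, 0, 0, 0, 0, 0, 0, 0, 0, 0, 0, 0, 0, 0, 0],
  [0, 0, 1, 0, 0, 2, 2, 1, 0, 0, 0, 0, 0, 0, 0, 1, 0, -1, 1, 0, -1, 0, 0, 0, 0, 0, 0, 0, 0, 0, 0, 0, 0, 0, 0, 0, 0, 0, 0, 0, 0, 0, 0, 0, 0, 0, 0, 0, 0, 0, 0, 0, 0, 0, 0, 0, 0, 0, 0, 0, 0, 0, 0, 0, 0, 0, 0, 0, 0, 0, 0, 0, 0, 0, 0, 0, 0, 0, 0, 0, 0],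
  [0, 0, 0, 0, 0, 0, 0, 0, 0, 0, 0, 0, 0, 0, 0, 0, 0, 1, 0, 0, 0, 0, 0, 0, 0, 0, -1, 0, 0, 0, 0, 0, 0, 0, 0, 0, 0, 0, 0, 0, 0, 0, 0, 0, 0, 0, 0, 0, 0, 0, 0, 0, 0, 0, 0, 0, 0, 0, 0, 0, 0, 0, 0, 0, 0, 0, 0, 0, 0, 0, 0, 0, 0, 0, 0, 0, 0, 0, 0, 0, 0],
  [0, 0, -1, 0, 0, -1, 0, -1, 0, 0, 0, 0, 0, 0, 0, 1, 0, 0, 1, 0, 0, 1, 0, 0, 0, 0, 0, 0, 0, 0, 0, 0, 0, 0, 0, 0, 0, 0, 0, 0, 0, 0, 0, 0, 0, 0, 0, 0, 0, 0, 0, 0, 0, 0, 0, 0, 0, 0, 0, 0, 0, 0, 0, 0, 0, 0, 0, 0, 0, 0, 0, 0, 0, 0, 0, 0, 0, 0, 0, 0, 0],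
  [0, 0, 1, 0, 0, 3, 2, 1, 0, 0, -1, 0, 0, 0, -1, 0, 0, -1, 1, 0, 0, 0, 0, 0, 0, 0, 1, 0, 0, 0, 0, 0, 1, 0, 0, 0, 0, 0, 1, 0, 0, 0, 0, 0, 0, 0, 0, 0, 0, 0, 0, 0, 0, 0, 0, 0, 0, 0, 0, 0, 0, 0, 0, 0, 0, 0, 0, 0, 0, 0, 0, 0, 0, 0, 0, 0, 0, 0, 0, 0, 0],
  [0, 0, 1, 0, 0, 1, 1, 1, 0, 0, 0, -1, 0, 0, 0, 0, 0, 1, 0, 0, 0, 0, 0, 0, 0, 0, 0, 0, 0, 0, 0, 0, 0, 0, 0, 0, 0, 0, 0, 0, 0, 0, 0, 0, 0, 0, 0, 0, 0, 0, 0, 0, 0, 0, 0, 0, 0, 0, 0, 0, 0, 0, 0, 0, 0, 0, 0, 0, 0, 0, 0, 0, 0, 0, 0, 0, 0, 0, 0, 0, 0],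
  [0, 0, 0, 0, 0, 1, 1, 0, 0, 0, 0, 0, 0, 0, 0, 0, 0, -1, 1, 0, 0, 0, 0, -1, 0, 0, 0, 0, 0, 0, -1, 0, 0, 0, 0, 0, 0, 0, 1, 0, 0, 0, 0, 0, 0, 0, 0, 0, 0, 0, 0, 0, 0, 0, 0, 0, 0, 0, 0, 0, 0, 0, 0, 0, 0, 0, 0, 0, 0, 0, 0, 0, 0, 0, 0, 0, 0, 0, 0, 0, 0],
  [0, 0, 0, 0, 0, -1, -1, 0, 0, 0, 0, 0, 0, -1, 1, 0, 0, 0, -1, 0, 0, 0, 0, 0, 0, 0, 0, 0, 0, 0, 0, 0, 0, 0, 0, 0, 0, 0, 0, 0, 0, 0, 0, 0, 0, 0, 0, 0, 0, 0, 0, 0, 0, 0, 0, 0, 0, 0, 0, 0, 0, 0, 0, 0, 0, 0, 0, 0, 0, 0, 0, 0, 0, 0, 0, 0, 0, 0, 0, 0, 0],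
  [0, 0, -1, 0, 0, -2, -1, -1, 0, 0, 0, 0, 0, 0, 0, 0, 0, 1, 0, 0, 0, 0, 0, 0, 0, 0, -1, 0, 0, 0, 0, 0, -1, 0, 0, 0, 0, 0, -1, 0, 0, 0, 0, 0, 0, 0, 0, 0, 0, 0, 0, 0, 0, 0, 0, 0, 0, 0, 0, 0, 0, 0, 0, 0, 0, 0, 0, 0, 0, 0, 0, 0, 0, 0, 0, 0, 0, 0, 0, 0, 0],
  [0, 0, 0, 0, 0, 0, 0, 0, 0, 0, 0, 0, 0, 0, 0, 0, 0, 0, 0, 0, 0, 0, 0, 0, 0, 0, 0, 0, 0, 0, 0, 0, 0, 0, 0, 0, 0, 0, 0, 0, 0, 0, 0, 0, 0, 0, 0, 0, 0, 0, 0, 0, 0, 0, 0, 0, 0, 0, 0, 0, 0, 0, 0, 0, 0, 0, 0, 0, 0, 0, 0, 0, 0, 0, 0, 0, 0, 0, 0, 0, 0],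
  [0, 0, 0, 0, 0, 0, 0, 0, 0, 0, 0, 0, 0, 0, -1, 0, -1, 1, 0, 0, 0, 0, 0, 1, 0, 0, 0, 0, 0, 0, 1, 0, 0, 0, 0, 0, 0, 0, -1, 0, 0, 0, 0, 0, 0, 0, 0, 0, 0, 0, 0, 0, 0, 0, 0, 0, 0, 0, 0, 0, 0, 0, 0, 0, 0, 0, 0, 0, 0, 0, 0, 0, 0, 0, 0, 0, 0, 0, 0, 0, 0],
  [0, 0, 0, 0, 0, 0, 0, 0, 0, 0, 0, 0, 0, 0, 0, 0, 0, 0, 0, 0, 0, 0, 0, 0, 0, 0, 0, 0, 0, 0, 0, 0, 0, 0, 0, 0, 0, 0, 0, 0, 0, 0, 0, 0, 0, 0, 0, 0, 0, 0, 0, 0, 0, 0, 0, 0, 0, 0, 0, 0, 0, 0, 0, 0, 0, 0, 0, 0, 0, 0, 0, 0, 0, 0, 0, 0, 0, 0, 0, 0, 0]]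

def uz1F (a : Fin 3 → ZMod 3) : ℤ := Lz1.getD (enc a) 0
def uz2F (a : Fin 3 → ZMod 3) : ℤ := Lz2.getD (enc a) 0
def cfF (a : Fin 3 → ZMod 3) : ℤ := Lcf.getD (enc a) 0
def cgF (a : Fin 3 → ZMod 3) : ℤ := Lcg.getD (enc a) 0
def uwF (y : Fin 4 → ZMod 3) : ℤ := Luw.getD (enc y) 0
def TF (b : Fin 2 → ZMod 3) (a : Fin 3 → ZMod 3) : ℤ := (LTm.getD (enc b) []).getD (enc a) 0
def SF (e : Fin 3 → ZMod 3) (y : Fin 4 → ZMod 3) : ℤ := (LSm.getD (enc e) []).getD (enc y) 0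

/-- Reinterpret a function as a finitely supported function, linearly. -/
noncomputable def toC {n : ℕ} : ((Fin n → ZMod 3) → ℤ) →ₗ[ℤ] ((Fin n → ZMod 3) →₀ ℤ) :=
  (Finsupp.linearEquivFunOnFinite ℤ ℤ (Fin n → ZMod 3)).symm.toLinearMap

lemma toC_apply {n : ℕ} (u : (Fin n → ZMod 3) → ℤ) (a : Fin n → ZMod 3) :
    toC u a = u a := rfl

lemma toC_coe {n : ℕ} (l : (Fin n → ZMod 3) →₀ ℤ) : toC ⇑l = l := by
  ext a; rfl

lemma toC_inj {n : ℕ} {u v : (Fin n → ZMod 3) → ℤ} (h : toC u = toC v) : u = v := by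
  funext a
  have := congrArg (fun l => Finsupp.toFun l a) h
  exact this

lemma triBnd_apply {n : ℕ} (x : Fin (n + 1) → ZMod 3) (a : Fin n → ZMod 3) :
    triBnd x a = cmat n x a := by
  simp [triBnd, cmat, Finsupp.finset_sum_apply, Finsupp.single_apply]

lemma boundary_toC {n : ℕ} (u : (Fin (n + 1) → ZMod 3) → ℤ) :
    triBoundary n (toC u) = toC (fun a => ∑ x : Fin (n + 1) → ZMod 3, u x * cmat n x a) := by
  have h1 : triBoundary n (toC u) = ∑ x : Fin (n + 1) → ZMod 3, u x • triBnd x := by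
    rw [triBoundary, Finsupp.lift_apply, Finsupp.sum_fintype]
    · rfl
    · intro x; exact zero_smul _ _
  ext a
  rw [h1, toC_apply, Finsupp.finset_sum_apply]
  simp [triBnd_apply]

/-- The functional dual to the free generator of `H₃`. -/
noncomputable def fLin : ((Fin 3 → ZMod 3) →₀ ℤ) →ₗ[ℤ] ℤ := Finsupp.lift ℤ ℤ _ cfF

/-- The functional dual to the torsion generator of `H₃`. -/
noncomputable def gLin : ((Fin 3 → ZMod 3) →₀ ℤ) →ₗ[ℤ] ℤ := Finsupp.lift ℤ ℤ _ cgF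

lemma fLin_toC (u : (Fin 3 → ZMod 3) → ℤ) :
    fLin (toC u) = ∑ a : Fin 3 → ZMod 3, u a * cfF a := by
  rw [fLin, Finsupp.lift_apply, Finsupp.sum_fintype]
  · rfl
  · intro x; exact zero_smul _ _

lemma gLin_toC (u : (Fin 3 → ZMod 3) → ℤ) :
    gLin (toC u) = ∑ a : Fin 3 → ZMod 3, u a * cgF a := by
  rw [gLin, Finsupp.lift_apply, Finsupp.sum_fintype]
  · rfl
  · intro x; exact zero_smul _ _

-- certified numerical facts
set_option maxRecDepth 1000000 in
set_option maxHeartbeats 80000000 in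
lemma hcyc1 : ∀ b : Fin 2 → ZMod 3, ∑ e : Fin 3 → ZMod 3, uz1F e * cmat 2 e b = 0 := by
  decide

set_option maxRecDepth 1000000 in
set_option maxHeartbeats 80000000 in
lemma hcyc2 : ∀ b : Fin 2 → ZMod 3, ∑ e : Fin 3 → ZMod 3, uz2F e * cmat 2 e b = 0 := by
  decide

set_option maxRecDepth 1000000 in
set_option maxHeartbeats 80000000 in
lemma hfz : (∑ a : Fin 3 → ZMod 3, uz1F a * cfF a = 1) ∧
    (∑ a : Fin 3 → ZMod 3, uz2F a * cfF a = 0) ∧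
    (∑ a : Fin 3 → ZMod 3, uz1F a * cgF a = 0) ∧
    (∑ a : Fin 3 → ZMod 3, uz2F a * cgF a = 1) := by
  decide

set_option maxRecDepth 1000000 in
set_option maxHeartbeats 80000000 in
lemma hfb : ∀ y : Fin 4 → ZMod 3, ∑ a : Fin 3 → ZMod 3, cmat 3 y a * cfF a = 0 := by
  decide

set_option maxRecDepth 1000000 in
set_option maxHeartbeats 80000000 in
lemma hgb : ∀ y : Fin 4 → ZMod 3, (∑ a : Fin 3 → ZMod 3, cmat 3 y a * cgF a) % 3 = 0 := by
  decide

set_option maxRecDepth 1000000 in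
set_option maxHeartbeats 80000000 in
lemma hw : ∀ a : Fin 3 → ZMod 3,
    ∑ y : Fin 4 → ZMod 3, uwF y * cmat 3 y a = 3 * uz2F a := by
  decide

set_option maxRecDepth 1000000 in
set_option maxHeartbeats 80000000 in
lemma hhom : ∀ (e : Fin 3 → ZMod 3) (a : Fin 3 → ZMod 3),
    ∑ y : Fin 4 → ZMod 3, SF e y * cmat 3 y a =
      (if e = a then 1 else 0) - cfF e * uz1F a - cgF e * uz2F a
      - ∑ b : Fin 2 → ZMod 3, cmat 2 e b * TF b a := by
  decide

lemma swap_sum {α β : Type*} [Fintype α] [Fintype β] (v : α → ℤ) (c : α → β → ℤ)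
    (w : β → ℤ) :
    ∑ a : β, (∑ x : α, v x * c x a) * w a = ∑ x : α, v x * (∑ a : β, c x a * w a) := by
  simp only [Finset.sum_mul, Finset.mul_sum, mul_assoc]
  exact Finset.sum_comm

noncomputable def castZ3 : ℤ →ₗ[ℤ] ZMod 3 :=
  (Int.castRingHom (ZMod 3)).toAddMonoidHom.toIntLinearMap

lemma castZ3_apply (z : ℤ) : castZ3 z = (z : ZMod 3) := rfl

/-- The map realizing `H₃`. -/
noncomputable def psi :
    (LinearMap.ker (triBoundary 2)) →ₗ[ℤ] ℤ × ZMod 3 :=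
  LinearMap.prod (fLin ∘ₗ (LinearMap.ker (triBoundary 2)).subtype)
    (castZ3 ∘ₗ gLin ∘ₗ (LinearMap.ker (triBoundary 2)).subtype)

lemma psi_apply (x : LinearMap.ker (triBoundary 2)) :
    psi x = (fLin x.1, castZ3 (gLin x.1)) := rfl

lemma psi_surj : Function.Surjective psi := by
  rintro ⟨m, c⟩
  set k : ℤ := (c.val : ℤ) with hk
  set u : (Fin 3 → ZMod 3) → ℤ := fun a => m * uz1F a + k * uz2F a with hu
  have hx : triBoundary 2 (toC u) = 0 := by
    rw [boundary_toC]
    have h0 : (fun b => ∑ e : Fin 3 → ZMod 3, u e * cmat 2 e b)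
        = fun _ : Fin 2 → ZMod 3 => (0 : ℤ) := by
      funext b
      simp only [hu, add_mul, Finset.sum_add_distrib, mul_assoc, ← Finset.mul_sum]
      rw [hcyc1 b, hcyc2 b]; ring
    rw [h0]; exact map_zero _
  refine ⟨⟨toC u, hx⟩, ?_⟩
  have hf : fLin (toC u) = m := by
    rw [fLin_toC]
    simp only [hu, add_mul, Finset.sum_add_distrib, mul_assoc, ← Finset.mul_sum]
    rw [hfz.1, hfz.2.1]; ring
  have hg : gLin (toC u) = k := by
    rw [gLin_toC]
    simp only [hu, add_mul, Finset.sum_add_distrib, mul_assoc, ← Finset.mul_sum]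
    rw [hfz.2.2.1, hfz.2.2.2]; ring
  rw [psi_apply, hf, hg, castZ3_apply, hk]
  rw [Int.cast_natCast]
  exact Prod.ext rfl (ZMod.natCast_rightInverse c)

lemma ker_coeff (x : LinearMap.ker (triBoundary 2)) (b : Fin 2 → ZMod 3) :
    ∑ e : Fin 3 → ZMod 3, (x.1 : (Fin 3 → ZMod 3) →₀ ℤ) e * cmat 2 e b = 0 := by
  have h1 : triBoundary 2 (toC ⇑x.1) = 0 := by rw [toC_coe]; exact x.2
  rw [boundary_toC] at h1
  have h2 : (fun b => ∑ e : Fin 3 → ZMod 3, x.1 e * cmat 2 e b)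
      = fun _ : Fin 2 → ZMod 3 => (0 : ℤ) := by
    apply toC_inj
    rw [h1]; exact (map_zero _).symm
  exact congrFun h2 b

lemma psi_ker :
    Submodule.comap (LinearMap.ker (triBoundary 2)).subtype
      (LinearMap.range (triBoundary 3)) = LinearMap.ker psi := by
  apply le_antisymm
  · rintro x hmem
    rw [Submodule.mem_comap] at hmem
    obtain ⟨y, hy⟩ := hmem
    have hy' : triBoundary 3 (toC ⇑y) = x.1 := by
      rw [toC_coe]; exact hy
    rw [boundary_toC] at hy'
    rw [LinearMap.mem_ker, psi_apply, ← hy']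
    have hf : fLin (toC fun a => ∑ z : Fin 4 → ZMod 3, y z * cmat 3 z a) = 0 := by
      rw [fLin_toC, swap_sum]
      exact Finset.sum_eq_zero fun z _ => by rw [hfb z, mul_zero]
    have hg : castZ3 (gLin (toC fun a => ∑ z : Fin 4 → ZMod 3, y z * cmat 3 z a)) = 0 := by
      rw [gLin_toC, swap_sum, castZ3_apply]
      rw [ZMod.intCast_zmod_eq_zero_iff_dvd]
      refine Finset.dvd_sum fun z _ => Dvd.dvd.mul_left ?_ (y z)
      exact_mod_cast Int.dvd_of_emod_eq_zero (hgb z)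
    rw [hf, hg]; rfl
  · rintro x hx
    rw [LinearMap.mem_ker, psi_apply, Prod.ext_iff] at hx
    obtain ⟨hf0, hg0⟩ := hx
    simp only [Prod.fst_zero, Prod.snd_zero] at hf0 hg0
    set X : (Fin 3 → ZMod 3) → ℤ := ⇑x.1 with hX
    have hfX : ∑ e : Fin 3 → ZMod 3, X e * cfF e = 0 := by
      rw [← fLin_toC, toC_coe]; exact hf0
    have hgX3 : ((3 : ℕ) : ℤ) ∣ ∑ e : Fin 3 → ZMod 3, X e * cgF e := by
      rw [← ZMod.intCast_zmod_eq_zero_iff_dvd, ← castZ3_apply, ← gLin_toC, toC_coe]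
      exact hg0
    have hgX3' : (3 : ℤ) ∣ ∑ e : Fin 3 → ZMod 3, X e * cgF e := by exact_mod_cast hgX3
    obtain ⟨k, hkk⟩ := hgX3'
    rw [Submodule.mem_comap]
    refine ⟨toC (fun y => (∑ e : Fin 3 → ZMod 3, X e * SF e y) + k * uwF y), ?_⟩
    rw [boundary_toC, Submodule.subtype_apply]
    have key : (fun a => ∑ y : Fin 4 → ZMod 3,
        ((∑ e : Fin 3 → ZMod 3, X e * SF e y) + k * uwF y) * cmat 3 y a) = X := by
      funext a
      have h1 : ∑ y : Fin 4 → ZMod 3,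
          ((∑ e : Fin 3 → ZMod 3, X e * SF e y) + k * uwF y) * cmat 3 y a
          = (∑ e : Fin 3 → ZMod 3, X e * (∑ y : Fin 4 → ZMod 3, SF e y * cmat 3 y a))
            + k * (∑ y : Fin 4 → ZMod 3, uwF y * cmat 3 y a) := by
        simp only [add_mul, Finset.sum_add_distrib, mul_assoc, ← Finset.mul_sum]
        rw [swap_sum]
      rw [h1, hw a]
      simp only [fun e => hhom e a]
      simp only [mul_sub, Finset.sum_sub_distrib, mul_ite, mul_one, mul_zero,
        Finset.sum_ite_eq', Finset.mem_univ, if_true]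
      have hB : ∑ e : Fin 3 → ZMod 3, X e * (cfF e * uz1F a)
          = (∑ e : Fin 3 → ZMod 3, X e * cfF e) * uz1F a := by
        rw [Finset.sum_mul]; simp only [mul_assoc]
      have hC : ∑ e : Fin 3 → ZMod 3, X e * (cgF e * uz2F a)
          = (∑ e : Fin 3 → ZMod 3, X e * cgF e) * uz2F a := by
        rw [Finset.sum_mul]; simp only [mul_assoc]
      have hD : ∑ e : Fin 3 → ZMod 3, X e * (∑ b : Fin 2 → ZMod 3, cmat 2 e b * TF b a)
          = 0 := by
        rw [← swap_sum]
        exact Finset.sum_eq_zero fun b _ => by rw [ker_coeff x b, zero_mul]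
      rw [hB, hC, hD, hfX, hkk]
      ring
    rw [key, hX, toC_coe]

theorem H3_iso :
    Nonempty
      ((LinearMap.ker (triBoundary 2) ⧸
          Submodule.comap (LinearMap.ker (triBoundary 2)).subtype
            (LinearMap.range (triBoundary 3))) ≃ₗ[ℤ] ℤ × ZMod 3) := by
  have hrange : LinearMap.range psi = ⊤ := LinearMap.range_eq_top.2 psi_surj
  exact ⟨(Submodule.quotEquivOfEq _ _ psi_ker).trans
    ((LinearMap.quotKerEquivRange psi).trans (LinearEquiv.ofTop (LinearMap.range psi) hrange))⟩
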